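/- For any τ ≥ 0 and any reals v₁, v₂ with |v₁| ≤ 1 and |v₂| ≤ 1: |e^τ v₁/sqrt(1+(e^{2τ}-1)v₁²) - e^τ v₂/sqrt(1+(e^{2τ}-1)v₂²)| ≤ e^{4τ} |v₁ - v₂|. -/

import Mathlib

open Real

lemma aux_lip (a b : ℝ) (ha : 0 < a) (hb : 0 ≤ b) (x y : ℝ) :
    |a * x / Real.sqrt (1 + b * x ^ 2) - a * y / Real.sqrt (1 + b * y ^ 2)| ≤
      a * |x - y| := by
  set f : ℝ → ℝ := fun v => a * v / Real.sqrt (1 + b * v ^ 2) with hf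
  set f' : ℝ → ℝ := fun v => a / Real.sqrt (1 + b * v ^ 2) ^ 3 with hf'
  have hd : ∀ v : ℝ, (1:ℝ) ≤ 1 + b * v ^ 2 := fun v => by nlinarith [sq_nonneg v]
  have hs : ∀ v : ℝ, (1:ℝ) ≤ Real.sqrt (1 + b * v ^ 2) := fun v => by
    simpa using Real.sqrt_le_sqrt (hd v)
  have hderiv : ∀ v : ℝ, HasDerivAt f (f' v) v := by
    intro v
    have hdpos : (0:ℝ) < 1 + b * v ^ 2 := lt_of_lt_of_le one_pos (hd v)
    have hspos : (0:ℝ) < Real.sqrt (1 + b * v ^ 2) := lt_of_lt_of_le one_pos (hs v)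
    have hinner : HasDerivAt (fun v : ℝ => 1 + b * v ^ 2) (2 * b * v) v := by
      have : HasDerivAt (fun v : ℝ => v ^ 2) (2 * v) v := by
        simpa using (hasDerivAt_pow 2 v)
      have := ((this.const_mul b).const_add 1)
      exact this.congr_deriv (by ring)
    have hsqrt : HasDerivAt (fun v : ℝ => Real.sqrt (1 + b * v ^ 2))
        (1 / (2 * Real.sqrt (1 + b * v ^ 2)) * (2 * b * v)) v :=
      (Real.hasDerivAt_sqrt (ne_of_gt hdpos)).comp v hinner
    have hnum : HasDerivAt (fun v : ℝ => a * v) a v := by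
      simpa using (hasDerivAt_id v).const_mul a
    have hq := hnum.div hsqrt (ne_of_gt hspos)
    refine hq.congr_deriv (Eq.symm ?_)
    rw [hf']
    have hsq : Real.sqrt (1 + b * v ^ 2) ^ 2 = 1 + b * v ^ 2 :=
      Real.sq_sqrt (le_of_lt hdpos)
    field_simp
    ring_nf
    linear_combination (-1 : ℝ) * hsq
  have hbound : ∀ v ∈ Set.univ, ‖f' v‖ ≤ a := by
    intro v _
    rw [Real.norm_eq_abs, hf']
    have hspos : (0:ℝ) < Real.sqrt (1 + b * v ^ 2) := lt_of_lt_of_le one_pos (hs v)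
    have h3 : (1:ℝ) ≤ Real.sqrt (1 + b * v ^ 2) ^ 3 := by nlinarith [hs v, sq_nonneg (Real.sqrt (1 + b * v ^ 2) - 1), sq_nonneg (Real.sqrt (1 + b * v ^ 2))]
    rw [abs_of_nonneg (div_nonneg ha.le (by positivity))]
    calc a / Real.sqrt (1 + b * v ^ 2) ^ 3 ≤ a / 1 := by
          apply div_le_div_of_nonneg_left ha.le one_pos h3
          
      _ = a := by ring
  have := Convex.norm_image_sub_le_of_norm_hasDerivWithin_le
    (f := f) (f' := f') (fun v _ => (hderiv v).hasDerivWithinAt) hbound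
    convex_univ (Set.mem_univ y) (Set.mem_univ x)
  simpa [Real.norm_eq_abs] using this

theorem stmt_15 (τ v₁ v₂ : ℝ) (hτ : 0 ≤ τ) (h₁ : |v₁| ≤ 1) (h₂ : |v₂| ≤ 1) :
    |Real.exp τ * v₁ / Real.sqrt (1 + (Real.exp (2 * τ) - 1) * v₁ ^ 2) -
      Real.exp τ * v₂ / Real.sqrt (1 + (Real.exp (2 * τ) - 1) * v₂ ^ 2)| ≤
      Real.exp (4 * τ) * |v₁ - v₂| := by
  have hb : 0 ≤ Real.exp (2 * τ) - 1 := by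
    have : (1:ℝ) ≤ Real.exp (2 * τ) := Real.one_le_exp (by linarith)
    linarith
  have h := aux_lip (Real.exp τ) (Real.exp (2 * τ) - 1) (Real.exp_pos τ) hb v₁ v₂
  have hle : Real.exp τ ≤ Real.exp (4 * τ) := Real.exp_le_exp.mpr (by linarith)
  calc _ ≤ Real.exp τ * |v₁ - v₂| := h
    _ ≤ Real.exp (4 * τ) * |v₁ - v₂| :=
        mul_le_mul_of_nonneg_right hle (abs_nonneg _)
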